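/- Let a < b be reals, 𝓘 = [a,b], let ϕ : 𝓘 → ℝ^μ and h : 𝓘 → ℝ^ϰ be measurable with square-integrable components, g(τ) = [ϕ(τ); h(τ)] ∈ ℝ^κ, and assume 𝔥 = ∫_𝓘 h hᵀ dτ ≻ 0 and 𝔈 = ∫_𝓘 ϕϕᵀ dτ − Γ 𝔥⁻¹ Γᵀ ≻ 0 with Γ = ∫_𝓘 ϕ hᵀ dτ, ε(τ) = ϕ(τ) − Γ 𝔥⁻¹ h(τ), T = [Γ 𝔥⁻¹; I_ϰ] √𝔥, T̃ = [I_μ; O_{ϰ,μ}] √𝔈. Then for any ∈ ℝ^{n×κn}, B̂ ∈ ℝ^{n×κp}, K ∈ ℝ^{p×n} and any square-integrable y : 𝓘 → ℝ^n: ∫_𝓘 [Â + B̂ (I_κ ⊗ K)] (g(τ) ⊗ I_n) y(τ) dτ = [Â (T ⊗ I_n) + B̂ (T ⊗ K)] ξ + [Â (T̃ ⊗ I_n) + B̂ (T̃ ⊗ K)] e, where ξ = ∫_𝓘 (√𝔥⁻¹ h(τ) ⊗ I_n) y(τ) dτ ∈ ℝ^{ϰn} and e = ∫_𝓘 (√𝔈⁻¹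 ε(τ) ⊗ I_n) y(τ) dτ ∈ ℝ^{μn}. -/

import Mathlib

open MeasureTheory Matrix Classical
open scoped Kronecker

/-- The Kronecker product `g ⊗ I_n` of a column vector `g ∈ ℝ^κ`
(indexed by `κI`) with the `n × n` identity matrix. -/
noncomputable def vecKronId {κI : Type*} (g : κI → ℝ) (n : ℕ) :
    Matrix (κI × Fin n) (Fin n) ℝ :=
  fun ki j => g ki.1 * (1 : Matrix (Fin n) (Fin n) ℝ) ki.2 j

/-- The entrywise (cross-)Gram integral `∫_{[a,b]} ϕ(τ) h(τ)ᵀ dτ`. -/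
noncomputable def gramOn {μI ϰI : Type*} (a b : ℝ) (ϕ : ℝ → μI → ℝ) (h : ℝ → ϰI → ℝ) :
    Matrix μI ϰI ℝ :=
  fun i j => ∫ τ in Set.Icc a b, ϕ τ i * h τ j

/-- The positive semidefinite square root `√X` of a positive semidefinite
real matrix (junk value `0` if `X` is not positive semidefinite). -/
noncomputable def psdSqrt {m : Type*} [Fintype m] [DecidableEq m] (X : Matrix m m ℝ) :
    Matrix m m ℝ :=
  if hX : X.PosSemidef then
    (hX.1.eigenvectorUnitary : Matrix m m ℝ) *
      diagonal ((↑) ∘ NNReal.sqrt ∘ Real.toNNReal ∘ hX.1.eigenvalues) *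
      (star hX.1.eigenvectorUnitary : Matrix m m ℝ)
  else 0

set_option maxHeartbeats 1000000

lemma psdSqrt_mul_self' {m : Type*} [Fintype m] [DecidableEq m] {X : Matrix m m ℝ}
    (hX : X.PosSemidef) : psdSqrt X * psdSqrt X = X := by
  have hU : (star hX.1.eigenvectorUnitary : Matrix m m ℝ) *
      (hX.1.eigenvectorUnitary : Matrix m m ℝ) = 1 := Unitary.coe_star_mul_self _
  have hA : ∀ A B C : Matrix m m ℝ, (A * B * C) * (A * B * C) = A * (B * (C * A) * B) * C := by
    intros; simp only [Matrix.mul_assoc]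
  rw [psdSqrt, dif_pos hX, hA, hU, Matrix.mul_one, diagonal_mul_diagonal]
  conv_rhs => rw [hX.1.spectral_theorem, Unitary.conjStarAlgAut_apply]
  congr 3
  funext i
  simp [hX.eigenvalues_nonneg i]


private lemma mulL2 {ν : Measure ℝ} {f g : ℝ → ℝ} (hf : MemLp f 2 ν) (hg : MemLp g 2 ν) :
    Integrable (fun τ => f τ * g τ) ν := by
  have h := MemLp.smul (φ := f) hg hf (p := 2) (q := 2) (r := 1)
  rw [memLp_one_iff_integrable] at h
  exact h

private lemma vecKronId_mulVec {κI : Type*} (v : κI → ℝ) {n : ℕ} (y : Fin n → ℝ) :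
    vecKronId v n *ᵥ y = fun j => v j.1 * y j.2 := by
  funext j
  simp [vecKronId, Matrix.mulVec, dotProduct, Matrix.one_apply, mul_ite, ite_mul, mul_assoc]

private lemma vecKronId_add {κI : Type*} (u v : κI → ℝ) (n : ℕ) :
    vecKronId (u + v) n = vecKronId u n + vecKronId v n := by
  ext ⟨k, r⟩ j
  simp [vecKronId, add_mul]

private lemma kron_one_mul_vecKronId {mI κI : Type*} [Fintype κI]
    (M : Matrix mI κI ℝ) {n : ℕ} (v : κI → ℝ) :
    (M ⊗ₖ (1 : Matrix (Fin n) (Fin n) ℝ)) * vecKronId v n = vecKronId (M *ᵥ v) n := by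
  ext ⟨i, r⟩ j
  simp only [Matrix.mul_apply, Matrix.kroneckerMap_apply, vecKronId, Fintype.sum_prod_type,
    Matrix.mulVec, dotProduct]
  simp [Matrix.one_apply, mul_ite, ite_mul, Finset.sum_ite_eq, Finset.sum_ite_eq',
    Finset.sum_mul, Finset.mul_sum, mul_comm, mul_assoc, mul_left_comm]

/-- **identity (19) of the paper.** A distributed-delay integral
term is rewritten through the finite-dimensional vectors
`ξ = ∫ (√𝔥⁻¹ h(τ) ⊗ Iₙ) y(τ) dτ` and `e = ∫ (√𝔈⁻¹ ε(τ) ⊗ Iₙ) y(τ) dτ`: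
`∫ [Â + B̂ (I_κ ⊗ K)] (g(τ) ⊗ Iₙ) y(τ) dτ
  = [Â (T ⊗ Iₙ) + B̂ (T ⊗ K)] ξ + [Â (T̃ ⊗ Iₙ) + B̂ (T̃ ⊗ K)] e`. -/
theorem ksd_distributed_delay_integral
    (μ ϰ n p : ℕ) (a b : ℝ) (hab : a < b)
    (ϕ : ℝ → Fin μ → ℝ) (h : ℝ → Fin ϰ → ℝ)
    (hϕmeas : ∀ i, Measurable fun τ => ϕ τ i)
    (hhmeas : ∀ i, Measurable fun τ => h τ i)
    (hϕL2 : ∀ i, MemLp (fun τ => ϕ τ i) 2 (volume.restrict (Set.Icc a b)))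
    (hhL2 : ∀ i, MemLp (fun τ => h τ i) 2 (volume.restrict (Set.Icc a b)))
    (𝔥 : Matrix (Fin ϰ) (Fin ϰ) ℝ) (h𝔥 : 𝔥 = gramOn a b h h) (h𝔥pd : 𝔥.PosDef)
    (Γ : Matrix (Fin μ) (Fin ϰ) ℝ) (hΓ : Γ = gramOn a b ϕ h)
    (𝔈 : Matrix (Fin μ) (Fin μ) ℝ)
    (h𝔈 : 𝔈 = gramOn a b ϕ ϕ - Γ * 𝔥⁻¹ * Γᵀ) (h𝔈pd : 𝔈.PosDef)
    (ε : ℝ → Fin μ → ℝ) (hε : ∀ τ, ε τ = ϕ τ - (Γ * 𝔥⁻¹) *ᵥ h τ)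
    (T : Matrix (Fin μ ⊕ Fin ϰ) (Fin ϰ) ℝ)
    (hT : T = Matrix.fromRows (Γ * 𝔥⁻¹) (1 : Matrix (Fin ϰ) (Fin ϰ) ℝ) * psdSqrt 𝔥)
    (Ttil : Matrix (Fin μ ⊕ Fin ϰ) (Fin μ) ℝ)
    (hTtil : Ttil =
      Matrix.fromRows (1 : Matrix (Fin μ) (Fin μ) ℝ) (0 : Matrix (Fin ϰ) (Fin μ) ℝ) * psdSqrt 𝔈)
    (Ahat : Matrix (Fin n) ((Fin μ ⊕ Fin ϰ) × Fin n) ℝ)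
    (Bhat : Matrix (Fin n) ((Fin μ ⊕ Fin ϰ) × Fin p) ℝ)
    (K : Matrix (Fin p) (Fin n) ℝ)
    (y : ℝ → Fin n → ℝ)
    (hymeas : ∀ i, Measurable fun τ => y τ i)
    (hyL2 : ∀ i, MemLp (fun τ => y τ i) 2 (volume.restrict (Set.Icc a b)))
    (ξ : Fin ϰ × Fin n → ℝ)
    (hξ : ξ = fun j => ∫ τ in Set.Icc a b, (vecKronId ((psdSqrt 𝔥)⁻¹ *ᵥ h τ) n *ᵥ y τ) j)
    (e : Fin μ × Fin n → ℝ)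
    (he : e = fun j => ∫ τ in Set.Icc a b, (vecKronId ((psdSqrt 𝔈)⁻¹ *ᵥ ε τ) n *ᵥ y τ) j) :
    (fun i => ∫ τ in Set.Icc a b,
        (((Ahat + Bhat * ((1 : Matrix (Fin μ ⊕ Fin ϰ) (Fin μ ⊕ Fin ϰ) ℝ) ⊗ₖ K)) *
            vecKronId (Sum.elim (ϕ τ) (h τ)) n) *ᵥ y τ) i) =
      (Ahat * (T ⊗ₖ (1 : Matrix (Fin n) (Fin n) ℝ)) + Bhat * (T ⊗ₖ K)) *ᵥ ξ +
        (Ahat * (Ttil ⊗ₖ (1 : Matrix (Fin n) (Fin n) ℝ)) + Bhat * (Ttil ⊗ₖ K)) *ᵥ e := by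
  set ν := volume.restrict (Set.Icc a b) with hν
  set S := psdSqrt 𝔥 with hS
  set SE := psdSqrt 𝔈 with hSE
  set M1 := Ahat * (T ⊗ₖ (1 : Matrix (Fin n) (Fin n) ℝ)) + Bhat * (T ⊗ₖ K) with hM1
  set M2 := Ahat * (Ttil ⊗ₖ (1 : Matrix (Fin n) (Fin n) ℝ)) + Bhat * (Ttil ⊗ₖ K) with hM2
  -- invertibility of the square roots
  have hSdef : S = psdSqrt 𝔥 := rfl
  have hSEdef : SE = psdSqrt 𝔈 := rfl
  have hSsq : S * S = 𝔥 := by rw [hSdef]; exact psdSqrt_mul_self' h𝔥pd.posSemidef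
  have hSEsq : SE * SE = 𝔈 := by rw [hSEdef]; exact psdSqrt_mul_self' h𝔈pd.posSemidef
  have hSdet : IsUnit S.det := by
    have : S.det * S.det = 𝔥.det := by rw [← Matrix.det_mul, hSsq]
    have h2 : S.det ≠ 0 := by
      intro h0
      rw [h0, mul_zero] at this
      exact h𝔥pd.det_pos.ne' this.symm
    exact h2.isUnit
  have hSEdet : IsUnit SE.det := by
    have : SE.det * SE.det = 𝔈.det := by rw [← Matrix.det_mul, hSEsq]
    have h2 : SE.det ≠ 0 := by
      intro h0
      rw [h0, mul_zero] at this
      exact h𝔈pd.det_pos.ne' this.symm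
    exact h2.isUnit
  have hSinv : S * S⁻¹ = 1 := Matrix.mul_nonsing_inv _ hSdet
  have hSEinv : SE * SE⁻¹ = 1 := Matrix.mul_nonsing_inv _ hSEdet
  -- key pointwise vector identity
  have key : ∀ τ, Sum.elim (ϕ τ) (h τ) = T *ᵥ (S⁻¹ *ᵥ h τ) + Ttil *ᵥ (SE⁻¹ *ᵥ ε τ) := by
    intro τ
    rw [Matrix.mulVec_mulVec, Matrix.mulVec_mulVec, hT, hTtil,
      Matrix.mul_assoc, Matrix.mul_assoc, hSinv, hSEinv, Matrix.mul_one, Matrix.mul_one,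
      Matrix.fromRows_mulVec, Matrix.fromRows_mulVec]
    funext x
    cases x with
    | inl i => simp [hε τ, Matrix.one_mulVec, Pi.sub_apply]
    | inr i => simp [Matrix.one_mulVec, Matrix.zero_mulVec]
  -- key pointwise matrix identity
  have keyM : ∀ τ,
      ((Ahat + Bhat * ((1 : Matrix (Fin μ ⊕ Fin ϰ) (Fin μ ⊕ Fin ϰ) ℝ) ⊗ₖ K)) *
          vecKronId (Sum.elim (ϕ τ) (h τ)) n)
        = M1 * vecKronId (S⁻¹ *ᵥ h τ) n + M2 * vecKronId (SE⁻¹ *ᵥ ε τ) n := by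
    intro τ
    rw [key τ, vecKronId_add, Matrix.mul_add]
    congr 1
    · rw [← kron_one_mul_vecKronId, ← Matrix.mul_assoc]
      congr 1
      rw [hM1, Matrix.add_mul, Matrix.mul_assoc, ← Matrix.mul_kronecker_mul,
        Matrix.one_mul, Matrix.mul_one]
    · rw [← kron_one_mul_vecKronId, ← Matrix.mul_assoc]
      congr 1
      rw [hM2, Matrix.add_mul, Matrix.mul_assoc, ← Matrix.mul_kronecker_mul,
        Matrix.one_mul, Matrix.mul_one]
  -- integrability
  have hεL2 : ∀ i, MemLp (fun τ => ε τ i) 2 ν := by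
    intro i
    have hrw : (fun τ => ε τ i)
        = (fun τ => ϕ τ i) - (fun τ => ∑ l, (Γ * 𝔥⁻¹) i l * h τ l) := by
      funext τ
      rw [hε τ]
      simp [Matrix.mulVec, dotProduct]
    rw [hrw]
    exact (hϕL2 i).sub (memLp_finset_sum _ fun l _ => (hhL2 l).const_mul _)
  have hFint : ∀ j : Fin ϰ × Fin n, Integrable (fun τ => (S⁻¹ *ᵥ h τ) j.1 * y τ j.2) ν := by
    intro j
    have hrw : (fun τ => (S⁻¹ *ᵥ h τ) j.1 * y τ j.2)
        = fun τ => ∑ l, S⁻¹ j.1 l * (h τ l * y τ j.2) := by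
      funext τ
      simp [Matrix.mulVec, dotProduct, Finset.sum_mul, mul_assoc]
    rw [hrw]
    exact integrable_finset_sum _ fun l _ => ((mulL2 (hhL2 l) (hyL2 j.2)).const_mul _)
  have hEint : ∀ j : Fin μ × Fin n, Integrable (fun τ => (SE⁻¹ *ᵥ ε τ) j.1 * y τ j.2) ν := by
    intro j
    have hrw : (fun τ => (SE⁻¹ *ᵥ ε τ) j.1 * y τ j.2)
        = fun τ => ∑ l, SE⁻¹ j.1 l * (ε τ l * y τ j.2) := by
      funext τ
      simp [Matrix.mulVec, dotProduct, Finset.sum_mul, mul_assoc]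
    rw [hrw]
    exact integrable_finset_sum _ fun l _ => ((mulL2 (hεL2 l) (hyL2 j.2)).const_mul _)
  -- main computation
  funext i
  have hpt : ∀ τ, (((Ahat + Bhat * ((1 : Matrix (Fin μ ⊕ Fin ϰ) (Fin μ ⊕ Fin ϰ) ℝ) ⊗ₖ K)) *
      vecKronId (Sum.elim (ϕ τ) (h τ)) n) *ᵥ y τ) i
      = (∑ j, M1 i j * ((S⁻¹ *ᵥ h τ) j.1 * y τ j.2))
        + (∑ j, M2 i j * ((SE⁻¹ *ᵥ ε τ) j.1 * y τ j.2)) := by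
    intro τ
    rw [keyM τ, Matrix.add_mulVec, ← Matrix.mulVec_mulVec, ← Matrix.mulVec_mulVec,
      vecKronId_mulVec, vecKronId_mulVec]
    simp [Matrix.mulVec, dotProduct]
  calc (∫ τ in Set.Icc a b, (((Ahat + Bhat *
          ((1 : Matrix (Fin μ ⊕ Fin ϰ) (Fin μ ⊕ Fin ϰ) ℝ) ⊗ₖ K)) *
          vecKronId (Sum.elim (ϕ τ) (h τ)) n) *ᵥ y τ) i)
      = ∫ τ, ((∑ j, M1 i j * ((S⁻¹ *ᵥ h τ) j.1 * y τ j.2))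
          + (∑ j, M2 i j * ((SE⁻¹ *ᵥ ε τ) j.1 * y τ j.2))) ∂ν := by
        rw [hν]; exact integral_congr_ae (Filter.Eventually.of_forall fun τ => hpt τ)
    _ = (∑ j, M1 i j * ∫ τ, (S⁻¹ *ᵥ h τ) j.1 * y τ j.2 ∂ν)
          + (∑ j, M2 i j * ∫ τ, (SE⁻¹ *ᵥ ε τ) j.1 * y τ j.2 ∂ν) := by
        rw [integral_add (integrable_finset_sum _ fun j _ => (hFint j).const_mul _)
          (integrable_finset_sum _ fun j _ => (hEint j).const_mul _),
          integral_finset_sum _ fun j _ => (hFint j).const_mul _,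
          integral_finset_sum _ fun j _ => (hEint j).const_mul _]
        simp_rw [integral_const_mul]
    _ = (M1 *ᵥ ξ + M2 *ᵥ e) i := by
        have hξ' : ξ = fun j => ∫ τ, (S⁻¹ *ᵥ h τ) j.1 * y τ j.2 ∂ν := by
          rw [hξ]; simp only [vecKronId_mulVec]
        have he' : e = fun j => ∫ τ, (SE⁻¹ *ᵥ ε τ) j.1 * y τ j.2 ∂ν := by
          rw [he]; simp only [vecKronId_mulVec]
        rw [hξ', he']
        simp [Matrix.mulVec, dotProduct, hν]
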